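/- The four-qubit invariant M(ψ) = |Σ ψ_{i₁j₁k₁l₁}ψ_{i₂j₂k₂l₂} ε_{i₁i₂}ε_{j₁j₂}ε_{k₁k₂}ε_{l₁l₂}| is invariant under ψ ↦ (A₁⊗A₂⊗A₃⊗A₄)ψ for all A_i ∈ SL(2,ℂ). -/

import Mathlib

open Matrix

/-- The two-index Levi-Civita symbol. -/
def eps2 : Fin 2 → Fin 2 → ℂ :=
  fun i j => if i = 0 ∧ j = 1 then 1 else if i = 1 ∧ j = 0 then -1 else 0

/-- Action of `A₁ ⊗ A₂ ⊗ A₃ ⊗ A₄` on a four-qubit state given by its coefficients. -/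
noncomputable def act4 (A₁ A₂ A₃ A₄ : Matrix (Fin 2) (Fin 2) ℂ)
    (ψ : Fin 2 × Fin 2 × Fin 2 × Fin 2 → ℂ) : Fin 2 × Fin 2 × Fin 2 × Fin 2 → ℂ :=
  fun x => ∑ i, ∑ j, ∑ k, ∑ l,
    A₁ x.1 i * A₂ x.2.1 j * A₃ x.2.2.1 k * A₄ x.2.2.2 l * ψ (i, j, k, l)

/-- The quadratic four-qubit invariant
`M(ψ) = |Σ ψ_{i₁j₁k₁l₁} ψ_{i₂j₂k₂l₂} ε_{i₁i₂} ε_{j₁j₂} ε_{k₁k₂} ε_{l₁l₂}|`. -/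
noncomputable def M4 (ψ : Fin 2 × Fin 2 × Fin 2 × Fin 2 → ℂ) : ℝ :=
  ‖(∑ i₁, ∑ i₂, ∑ j₁, ∑ j₂, ∑ k₁, ∑ k₂, ∑ l₁, ∑ l₂,
    ψ (i₁, j₁, k₁, l₁) * ψ (i₂, j₂, k₂, l₂) *
      eps2 i₁ i₂ * eps2 j₁ j₂ * eps2 k₁ k₂ * eps2 l₁ l₂)‖

/-- The contracted bilinear expression transforms with the product of determinants. -/
theorem M4_key (ψ : Fin 2 × Fin 2 × Fin 2 × Fin 2 → ℂ)
    (A₁ A₂ A₃ A₄ : Matrix (Fin 2) (Fin 2) ℂ) :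
    (∑ i₁, ∑ i₂, ∑ j₁, ∑ j₂, ∑ k₁, ∑ k₂, ∑ l₁, ∑ l₂,
      act4 A₁ A₂ A₃ A₄ ψ (i₁, j₁, k₁, l₁) * act4 A₁ A₂ A₃ A₄ ψ (i₂, j₂, k₂, l₂) *
        eps2 i₁ i₂ * eps2 j₁ j₂ * eps2 k₁ k₂ * eps2 l₁ l₂)
    = A₁.det * A₂.det * A₃.det * A₄.det *
      (∑ i₁, ∑ i₂, ∑ j₁, ∑ j₂, ∑ k₁, ∑ k₂, ∑ l₁, ∑ l₂,
        ψ (i₁, j₁, k₁, l₁) * ψ (i₂, j₂, k₂, l₂) *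
          eps2 i₁ i₂ * eps2 j₁ j₂ * eps2 k₁ k₂ * eps2 l₁ l₂) := by
  simp only [act4, eps2, Matrix.det_fin_two, Fin.sum_univ_two]
  norm_num
  ring

/-- the invariant `M4` is invariant under
`ψ ↦ (A₁⊗A₂⊗A₃⊗A₄)ψ` with all `Aᵢ ∈ SL(2,ℂ)`. -/
theorem M4_SL_invariant (ψ : Fin 2 × Fin 2 × Fin 2 × Fin 2 → ℂ)
    (A₁ A₂ A₃ A₄ : Matrix (Fin 2) (Fin 2) ℂ)
    (h₁ : A₁.det = 1) (h₂ : A₂.det = 1) (h₃ : A₃.det = 1) (h₄ : A₄.det = 1) :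
    M4 (act4 A₁ A₂ A₃ A₄ ψ) = M4 ψ := by
  unfold M4
  rw [M4_key, h₁, h₂, h₃, h₄]
  norm_num
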